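/- Let U be an open subset of ℂⁿ, let K ⊆ U be compact, let (μ_l)_{l∈ℕ} be a family of outer measures on U, let (u_k)_{k∈ℕ} be a sequence of continuous functions u_k : U → ℝ decreasing pointwise to a function u : U → ℝ. Assume that for every δ > 0, sup_l μ_l({x ∈ K : u_k(x) − u(x) ≥ δ}) → 0 as k → ∞. Then for every ε > 0 there exists a subset S ⊆ K such that μ_l(K \ S) ≤ ε for every l, and the restriction of u to S is continuous. -/

import Mathlib

open MeasureTheory Filter

/-- Egorov-type argument, uniform in a family of outer measures, used in the proof of
Theorem 2.3: if continuous functions `u k` decrease pointwise on `U` to `v`, and the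
sets where `u k - v ≥ δ` on a compact `K ⊆ U` have outer measure tending to `0`
uniformly in the family, then off a set of uniformly small outer measure in `K` the
limit `v` is continuous. -/
theorem egorov_uniform_outer_measure (n : ℕ) (U : Set (Fin n → ℂ)) (hU : IsOpen U)
    (K : Set (Fin n → ℂ)) (hK : IsCompact K) (hKU : K ⊆ U)
    (μ : ℕ → OuterMeasure (Fin n → ℂ))
    (u : ℕ → (Fin n → ℂ) → ℝ) (v : (Fin n → ℂ) → ℝ)
    (hu_cont : ∀ k, ContinuousOn (u k) U)
    (hu_anti : ∀ x ∈ U, Antitone (fun k => u k x))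
    (hu_lim : ∀ x ∈ U, Tendsto (fun k => u k x) atTop (nhds (v x)))
    (hcap : ∀ δ : ℝ, 0 < δ →
      Tendsto (fun k => ⨆ l, μ l {x ∈ K | δ ≤ u k x - v x}) atTop (nhds 0)) :
    ∀ ε : ENNReal, 0 < ε →
      ∃ S ⊆ K, (∀ l, μ l (K \ S) ≤ ε) ∧ ContinuousOn v S := by
  intro ε hε
  have hδ : ∀ j : ℕ, (0:ℝ) < 1/(j+1) := fun j => by positivity
  have hc : ∀ j : ℕ, (0:ENNReal) < ε * (1/2)^(j+1) := by
    intro j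
    refine ENNReal.mul_pos hε.ne' ?_
    exact (pow_ne_zero _ (by norm_num : (1/2 : ENNReal) ≠ 0))
  have hsel : ∀ j : ℕ, ∃ k, (⨆ l, μ l {x ∈ K | 1/(j+1:ℝ) ≤ u k x - v x}) ≤ ε * (1/2)^(j+1) := by
    intro j
    have := (hcap (1/(j+1)) (hδ j)).eventually (gt_mem_nhds (hc j))
    exact this.exists.imp fun k hk => hk.le
  choose k hk using hsel
  set A : ℕ → Set (Fin n → ℂ) := fun j => {x ∈ K | 1/(j+1:ℝ) ≤ u (k j) x - v x} with hA
  set S : Set (Fin n → ℂ) := K \ ⋃ j, A j with hS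
  have hSK : S ⊆ K := Set.diff_subset
  have hSU : S ⊆ U := fun x hx => hKU (hSK hx)
  refine ⟨S, hSK, ?_, ?_⟩
  · intro l
    have h1 : K \ S ⊆ ⋃ j, A j := by
      intro x hx
      by_contra h
      exact hx.2 ⟨hx.1, h⟩
    calc μ l (K \ S) ≤ μ l (⋃ j, A j) := (μ l).mono h1
      _ ≤ ∑' j, μ l (A j) := measure_iUnion_le A
      _ ≤ ∑' j, ε * (1/2)^(j+1) :=
          ENNReal.tsum_le_tsum fun j => le_trans (le_iSup (fun l => μ l (A j)) l) (hk j)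
      _ = ε * ∑' j : ℕ, (1/2:ENNReal)^(j+1) := ENNReal.tsum_mul_left
      _ = ε * ((1/2) * ∑' j : ℕ, (1/2:ENNReal)^j) := by
          congr 1
          simp_rw [pow_succ, mul_comm]
          exact ENNReal.tsum_mul_left
      _ = ε := by
          rw [ENNReal.tsum_geometric]
          norm_num
          rw [ENNReal.inv_mul_cancel (by norm_num) (by norm_num), mul_one]
  · have hvle : ∀ x ∈ U, ∀ m, v x ≤ u m x := fun x hx m =>
      le_of_tendsto (hu_lim x hx) (eventually_atTop.2 ⟨m, fun b hb => hu_anti x hx hb⟩)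
    have huniform : TendstoUniformlyOn (fun j => u (k j)) v atTop S := by
      rw [Metric.tendstoUniformlyOn_iff]
      intro d hd
      obtain ⟨J, hJ⟩ := exists_nat_one_div_lt hd
      filter_upwards [eventually_ge_atTop J] with j hj x hx
      have hxU := hSU hx
      have h1 : u (k j) x - v x < 1/(j+1) := by
        by_contra h
        push_neg at h
        exact hx.2 (Set.mem_iUnion.2 ⟨j, ⟨hx.1, h⟩⟩)
      rw [Real.dist_eq, abs_sub_comm, abs_of_nonneg (sub_nonneg.2 (hvle x hxU _))]
      have h2 : (1:ℝ)/(j+1) ≤ 1/(J+1) := by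
        have hj' : (J:ℝ) + 1 ≤ (j:ℝ) + 1 := by exact_mod_cast Nat.succ_le_succ hj
        gcongr
      exact (h1.trans_le h2).trans hJ
    exact huniform.continuousOn (Eventually.of_forall fun j => (hu_cont (k j)).mono hSU).frequently
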